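/- arXiv:2502.15234 — 2 statements merged into one kernel-verified Lean document; each statement's English description precedes it below -/
import Mathlib

section
/- Let τ ≥ 0 and C ≥ 0 be real numbers and let (a_n), (b_n), (c_n), (d_n) be sequences of nonnegative real numbers. Fix m ∈ ℕ and suppose that for every natural number k with 0 ≤ k ≤ m one has a_k + τ·Σ_{n=0}^{k} b_n ≤ τ·Σ_{n=0}^{k} d_n·a_n + τ·Σ_{n=0}^{k} c_n + C. Suppose moreover that τ·d_n < 1 for every 0 ≤ n ≤ m, and set σ_n = (1 − τ·d_n)^{-1}. Then a_m + τ·Σ_{n=0}^{m} b_n ≤ exp(τ·Σ_{n=0}^{m} σ_n·d_n) · (τ·Σ_{n=0}^{m} c_n + C). -/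
open Finset

namespace HeywoodRannacher

/-- Discrete Grönwall inequality (Heywood–Rannacher form). -/
theorem discrete_gronwall
    (τ C : ℝ) (hτ : 0 ≤ τ) (hC : 0 ≤ C)
    (a b c d : ℕ → ℝ)
    (ha : ∀ n, 0 ≤ a n) (hb : ∀ n, 0 ≤ b n) (hc : ∀ n, 0 ≤ c n) (hd : ∀ n, 0 ≤ d n)
    (m : ℕ)
    (hrec : ∀ k ≤ m,
      a k + τ * ∑ n ∈ range (k + 1), b n ≤
        τ * ∑ n ∈ range (k + 1), d n * a n + τ * ∑ n ∈ range (k + 1), c n + C)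
    (hsmall : ∀ n ≤ m, τ * d n < 1) :
    a m + τ * ∑ n ∈ range (m + 1), b n ≤
      Real.exp (τ * ∑ n ∈ range (m + 1), (1 - τ * d n)⁻¹ * d n) *
        (τ * ∑ n ∈ range (m + 1), c n + C) := by
  have hpos : ∀ n ≤ m, 0 < 1 - τ * d n := fun n hn => by linarith [hsmall n hn]
  set Q : ℕ → ℝ := fun k => ∏ n ∈ range k, (1 - τ * d n)⁻¹ with hQdef
  set S : ℕ → ℝ := fun k => τ * ∑ n ∈ range (k + 1), c n + C with hSdef
  have hQsucc : ∀ k, Q (k + 1) = Q k * (1 - τ * d k)⁻¹ := by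
    intro k; simp only [hQdef]; rw [prod_range_succ]
  have hQpos : ∀ k ≤ m + 1, 0 < Q k := by
    intro k hk
    apply Finset.prod_pos
    intro n hn
    exact inv_pos.mpr (hpos n (by have := mem_range.mp hn; omega))
  have hQrec : ∀ k ≤ m, Q (k + 1) = Q k + τ * d k * Q (k + 1) := by
    intro k hk
    have h1 := hpos k hk
    rw [hQsucc k]
    field_simp
    ring
  have hQid : ∀ k ≤ m + 1, Q k = 1 + τ * ∑ n ∈ range k, d n * Q (n + 1) := by
    intro k hk
    induction k with
    | zero => simp [hQdef]
    | succ k ih =>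
      have hk' : k ≤ m := by omega
      calc Q (k + 1) = Q k + τ * d k * Q (k + 1) := hQrec k hk'
        _ = 1 + τ * ∑ n ∈ range k, d n * Q (n + 1) + τ * d k * Q (k + 1) := by
            rw [← ih (by omega)]
        _ = 1 + τ * ∑ n ∈ range (k + 1), d n * Q (n + 1) := by
            rw [sum_range_succ]; ring
  have hSnn : ∀ k, 0 ≤ S k := by
    intro k
    have : 0 ≤ ∑ n ∈ range (k + 1), c n := Finset.sum_nonneg fun n _ => hc n
    simp only [hSdef]
    positivity
  have hSmono : ∀ n k, n ≤ k → S n ≤ S k := by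
    intro n k hnk
    simp only [hSdef]
    have : ∑ j ∈ range (n + 1), c j ≤ ∑ j ∈ range (k + 1), c j := by
      apply Finset.sum_le_sum_of_subset_of_nonneg
      · exact range_subset_range.mpr (by omega)
      · exact fun j _ _ => hc j
    nlinarith
  have key : ∀ k, k ≤ m → a k + τ * ∑ n ∈ range (k + 1), b n ≤ Q (k + 1) * S k := by
    intro k
    induction k using Nat.strong_induction_on with
    | _ k ih =>
      intro hk
      have hBnn : 0 ≤ τ * ∑ n ∈ range (k + 1), b n := by
        have : 0 ≤ ∑ n ∈ range (k + 1), b n := Finset.sum_nonneg fun n _ => hb n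
        positivity
      have hrk := hrec k hk
      rw [sum_range_succ (f := fun n => d n * a n), mul_add] at hrk
      -- hrk : a k + τ * Σb ≤ τ * Σ_{<k} d a + τ * (d k * a k) + S k
      have hsum : ∑ n ∈ range k, d n * a n ≤
          (∑ n ∈ range k, d n * Q (n + 1)) * S k := by
        rw [Finset.sum_mul]
        apply Finset.sum_le_sum
        intro n hn
        have hn' : n < k := mem_range.mp hn
        have hnm : n ≤ m := by omega
        have han : a n ≤ Q (n + 1) * S n := by
          have h1 := ih n hn' hnm
          have h2 : 0 ≤ τ * ∑ j ∈ range (n + 1), b j := by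
            have : 0 ≤ ∑ j ∈ range (n + 1), b j := Finset.sum_nonneg fun j _ => hb j
            positivity
          linarith
        have hQn : 0 ≤ Q (n + 1) := (hQpos (n + 1) (by omega)).le
        calc d n * a n ≤ d n * (Q (n + 1) * S k) := by
              apply mul_le_mul_of_nonneg_left _ (hd n)
              exact le_trans han (mul_le_mul_of_nonneg_left (hSmono n k (by omega)) hQn)
          _ = d n * Q (n + 1) * S k := by ring
      have hsum' : τ * ∑ n ∈ range k, d n * a n ≤
          τ * ((∑ n ∈ range k, d n * Q (n + 1)) * S k) :=
        mul_le_mul_of_nonneg_left hsum hτ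
      have hid : Q k * S k = S k + τ * ((∑ n ∈ range k, d n * Q (n + 1)) * S k) := by
        rw [hQid k (by omega)]; ring
      have hdknn : 0 ≤ τ * (d k * (a k + τ * ∑ n ∈ range (k + 1), b n)) := by
        have := ha k
        have := hd k
        positivity
      have h2 : (1 - τ * d k) * (a k + τ * ∑ n ∈ range (k + 1), b n) ≤ Q k * S k := by
        have expand : (1 - τ * d k) * (a k + τ * ∑ n ∈ range (k + 1), b n) =
            a k + τ * ∑ n ∈ range (k + 1), b n - τ * (d k * a k)
              - τ * (d k * (τ * ∑ n ∈ range (k + 1), b n)) := by ring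
        have hnn2 : 0 ≤ τ * (d k * (τ * ∑ n ∈ range (k + 1), b n)) := by
          have := hd k
          positivity
        have hSk : S k = τ * ∑ n ∈ range (k + 1), c n + C := rfl
        rw [expand, hid]
        linarith [hSk]
      have hk1 := hpos k hk
      calc a k + τ * ∑ n ∈ range (k + 1), b n
          = (1 - τ * d k)⁻¹ * ((1 - τ * d k) * (a k + τ * ∑ n ∈ range (k + 1), b n)) := by
            rw [← mul_assoc, inv_mul_cancel₀ hk1.ne', one_mul]
        _ ≤ (1 - τ * d k)⁻¹ * (Q k * S k) :=
            mul_le_mul_of_nonneg_left h2 (inv_nonneg.mpr hk1.le)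
        _ = Q (k + 1) * S k := by rw [hQsucc k]; ring
  have hexp : Q (m + 1) ≤ Real.exp (τ * ∑ n ∈ range (m + 1), (1 - τ * d n)⁻¹ * d n) := by
    rw [Finset.mul_sum, Real.exp_sum]
    apply Finset.prod_le_prod
    · intro n hn
      exact (inv_pos.mpr (hpos n (by have := mem_range.mp hn; omega))).le
    · intro n hn
      have hn' : n ≤ m := by have := mem_range.mp hn; omega
      have h1 := hpos n hn'
      have hid : (1 - τ * d n)⁻¹ = 1 + τ * ((1 - τ * d n)⁻¹ * d n) := by
        field_simp
        ring
      nth_rewrite 1 [hid]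
      have := Real.add_one_le_exp (τ * ((1 - τ * d n)⁻¹ * d n))
      linarith
  calc a m + τ * ∑ n ∈ range (m + 1), b n ≤ Q (m + 1) * S m := key m le_rfl
    _ ≤ Real.exp (τ * ∑ n ∈ range (m + 1), (1 - τ * d n)⁻¹ * d n) * S m :=
        mul_le_mul_of_nonneg_right hexp (hSnn m)

end HeywoodRannacher
end

section
/- Let H be a real Hilbert space, let C > 0, and let u : ℝ → H be twice differentiable. Define ρ : ℝ → ℝ by ρ(t) = √(½‖u(t)‖² + C). Then ρ is twice differentiable and for every t ∈ ℝ, |ρ″(t)|² ≤ (‖u″(t)‖²·‖u(t)‖² + ‖u′(t)‖⁴)/C + (‖u′(t)‖⁴·‖u(t)‖⁴)/(8·C³). -/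
open Real

/-- Quantitative second-derivative bound for the SAV auxiliary variable
`ρ(t) = √(½‖u(t)‖² + C)`. -/
theorem sav_rho_second_derivative_bound
    {H : Type*} [NormedAddCommGroup H] [InnerProductSpace ℝ H] [CompleteSpace H]
    (C : ℝ) (hC : 0 < C) (u u' u'' : ℝ → H)
    (hu : ∀ t, HasDerivAt u (u' t) t)
    (hu' : ∀ t, HasDerivAt u' (u'' t) t)
    (ρ : ℝ → ℝ) (hρ : ∀ t, ρ t = Real.sqrt (1 / 2 * ‖u t‖ ^ 2 + C)) :
    ∃ ρ' ρ'' : ℝ → ℝ, (∀ t, HasDerivAt ρ (ρ' t) t) ∧ (∀ t, HasDerivAt ρ' (ρ'' t) t) ∧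
      ∀ t, |ρ'' t| ^ 2 ≤
        (‖u'' t‖ ^ 2 * ‖u t‖ ^ 2 + ‖u' t‖ ^ 4) / C +
          ‖u' t‖ ^ 4 * ‖u t‖ ^ 4 / (8 * C ^ 3) := by
  set e : ℝ → ℝ := fun t => 1 / 2 * ‖u t‖ ^ 2 + C with he_def
  have heC : ∀ t, C ≤ e t := fun t => by
    have := sq_nonneg ‖u t‖; simp only [he_def]; nlinarith
  have he_pos : ∀ t, 0 < e t := fun t => lt_of_lt_of_le hC (heC t)
  set E' : ℝ → ℝ := fun t => inner ℝ (u' t) (u t) with hE'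
  set E'' : ℝ → ℝ := fun t => inner ℝ (u'' t) (u t) + inner ℝ (u' t) (u' t) with hE''
  have hde : ∀ t, HasDerivAt e (E' t) t := by
    intro t
    have h1 : HasDerivAt (fun t => (inner ℝ (u t) (u t) : ℝ)) (E' t + E' t) t := by
      have := (hu t).inner ℝ (hu t)
      simpa [hE', real_inner_comm (u t) (u' t)] using this
    have h2 := (h1.const_mul (1/2 : ℝ)).add_const C
    have : ∀ t, e t = 1/2 * inner ℝ (u t) (u t) + C := by
      intro t; simp [he_def, real_inner_self_eq_norm_sq]
    rw [show e = fun t => 1/2 * (inner ℝ (u t) (u t) : ℝ) + C from funext this]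
    refine h2.congr_deriv ?_; ring
  have hde' : ∀ t, HasDerivAt E' (E'' t) t := by
    intro t
    have h := (hu' t).inner ℝ (hu t)
    refine h.congr_deriv ?_
    simp only [hE'']; exact add_comm _ _
  have hs_pos : ∀ t, 0 < Real.sqrt (e t) := fun t => Real.sqrt_pos.mpr (he_pos t)
  have hsq : ∀ t, Real.sqrt (e t) ^ 2 = e t := fun t => Real.sq_sqrt (he_pos t).le
  refine ⟨fun t => E' t / (2 * Real.sqrt (e t)),
    fun t => E'' t / (2 * Real.sqrt (e t)) - E' t ^ 2 / (4 * Real.sqrt (e t) ^ 3),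
    ?_, ?_, ?_⟩
  · intro t
    have h := (hde t).sqrt (ne_of_gt (he_pos t))
    have hρe : ρ = fun t => Real.sqrt (e t) := funext fun t => hρ t
    rw [hρe]; exact h
  · intro t
    have hden : HasDerivAt (fun t => 2 * Real.sqrt (e t)) (2 * (E' t / (2 * Real.sqrt (e t)))) t :=
      ((hde t).sqrt (ne_of_gt (he_pos t))).const_mul 2
    have h := (hde' t).div hden (by positivity)
    refine h.congr_deriv ?_
    have hsne := ne_of_gt (hs_pos t)
    field_simp
    ring
  · intro t
    set s := Real.sqrt (e t) with hs
    set a : ℝ := inner ℝ (u'' t) (u t)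
    set X := ‖u'' t‖ ^ 2 * ‖u t‖ ^ 2 + ‖u' t‖ ^ 4 with hX
    have hb : (inner ℝ (u' t) (u' t) : ℝ) = ‖u' t‖ ^ 2 := real_inner_self_eq_norm_sq _
    have ha2 : a ^ 2 ≤ ‖u'' t‖ ^ 2 * ‖u t‖ ^ 2 := by
      have h := abs_real_inner_le_norm (u'' t) (u t)
      nlinarith [abs_nonneg a, sq_abs a]
    have hE'2 : E' t ^ 2 ≤ ‖u' t‖ ^ 2 * ‖u t‖ ^ 2 := by
      have h := abs_real_inner_le_norm (u' t) (u t)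
      nlinarith [abs_nonneg (E' t), sq_abs (E' t)]
    have hE''2 : E'' t ^ 2 ≤ 2 * X := by
      have hE : E'' t = a + ‖u' t‖ ^ 2 := by simp [hE'', hb]; rfl
      rw [hE, hX]; nlinarith [ha2, sq_nonneg (a - ‖u' t‖ ^ 2)]
    have hE'4 : E' t ^ 4 ≤ ‖u' t‖ ^ 4 * ‖u t‖ ^ 4 := by
      nlinarith [sq_nonneg (E' t), hE'2, sq_nonneg ‖u' t‖, sq_nonneg ‖u t‖]
    have hsp : 0 < s := hs_pos t
    have hsne : s ≠ 0 := ne_of_gt hsp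
    have hsqt : s ^ 2 = e t := by rw [hs]; exact hsq t
    have heCt := heC t
    have hept := he_pos t
    have key : (E'' t / (2 * s) - E' t ^ 2 / (4 * s ^ 3)) ^ 2
        ≤ E'' t ^ 2 / (2 * s ^ 2) + E' t ^ 4 / (8 * s ^ 6) := by
      have hcomb : E'' t / (2 * s) - E' t ^ 2 / (4 * s ^ 3)
          = (2 * E'' t * s ^ 2 - E' t ^ 2) / (4 * s ^ 3) := by
        field_simp; ring
      rw [hcomb, div_pow, div_add_div _ _ (by positivity) (by positivity),
        div_le_div_iff₀ (by positivity) (by positivity)]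
      nlinarith [sq_nonneg (2 * E'' t * s ^ 2 + E' t ^ 2), pow_pos hsp 6, pow_pos hsp 2,
        mul_pos (pow_pos hsp 6) (pow_pos hsp 2),
        mul_nonneg (sq_nonneg (2 * E'' t * s ^ 2 + E' t ^ 2)) (pow_pos hsp 6).le]
    have hs6 : s ^ 6 = e t ^ 3 := by rw [← hsqt]; ring
    rw [hsqt, hs6] at key
    rw [sq_abs]
    refine le_trans key (add_le_add ?_ ?_)
    · calc E'' t ^ 2 / (2 * e t) ≤ (2 * X) / (2 * C) := by
            apply div_le_div₀ (by positivity) hE''2 (by positivity) (by linarith)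
        _ = X / C := by rw [mul_div_mul_left _ _ (by norm_num : (2:ℝ) ≠ 0)]
    · calc E' t ^ 4 / (8 * e t ^ 3) ≤ (‖u' t‖ ^ 4 * ‖u t‖ ^ 4) / (8 * C ^ 3) := by
            apply div_le_div₀ (by positivity) hE'4 (by positivity)
            have : C ^ 3 ≤ e t ^ 3 := pow_le_pow_left₀ hC.le heCt 3
            linarith
        _ = ‖u' t‖ ^ 4 * ‖u t‖ ^ 4 / (8 * C ^ 3) := rfl
end
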